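/- Let F be a field, k ≥ 1, and let E be the 2×(k+1)×k hypermatrix with E_{h,i,j} = 1 if i = h + j - 1 and 0 otherwise. For permutations σ ∈ S_{k+1} and π ∈ S_k with permutation matrices m_σ, m_{π^{-1}}, the hypermatrix (m_σ, m_{π^{-1}}) ∘ E (acting by simultaneous row operations m_σ on both faces and simultaneous column operations m_{π^{-1}}^T on both faces) equals the hypermatrix M with M_{1,i,j} = 1 iff i = w(j), M_{2,i,j} = 1 iff i = w(c(j)), and all other entries 0, where π̄ ∈ S_{k+1} fixes k+1 and extends π, w = σ∘π̄, and c = π̄^{-1}∘(1 2 ··· k+1)∘π̄. -/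

import Mathlib

/-- Extend a permutation of `Fin k` to a permutation of `Fin (k+1)` fixing the last
element (`π̄`). -/
noncomputable def extendPerm (k : ℕ) (π : Equiv.Perm (Fin k)) : Equiv.Perm (Fin (k + 1)) :=
  π.viaFintypeEmbedding Fin.castSuccEmb

/-- The permutation matrix `m_σ` with `(m_σ)_{ij} = 1` iff `i = σ(j)`. -/
def permMat (F : Type*) [Zero F] [One F] {n : Type*} [DecidableEq n]
    (σ : Equiv.Perm n) : Matrix n n F :=
  Matrix.of fun i j => if i = σ j then 1 else 0

lemma extendPerm_castSucc (k : ℕ) (π : Equiv.Perm (Fin k)) (j : Fin k) :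
    extendPerm k π j.castSucc = (π j).castSucc := by
  simpa [extendPerm] using Equiv.Perm.viaFintypeEmbedding_apply_image π Fin.castSuccEmb j

lemma permMat_mul {F : Type*} [Field F] {m n : Type*} [DecidableEq m] [DecidableEq n]
    [Fintype m] [Fintype n] (σ : Equiv.Perm m) (M : Matrix m n F) :
    permMat F σ * M = Matrix.of fun i j => M (σ⁻¹ i) j := by
  ext i j
  have : ∀ a : m, (i = σ a) = (σ⁻¹ i = a) := by
    intro a; simp [Equiv.Perm.inv_def, Equiv.symm_apply_eq]
  simp only [Matrix.mul_apply, permMat, Matrix.of_apply, this, ite_mul, one_mul, zero_mul]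
  simp

lemma mul_permMat {F : Type*} [Field F] {m n : Type*} [DecidableEq m] [DecidableEq n]
    [Fintype m] [Fintype n] (π : Equiv.Perm n) (M : Matrix m n F) :
    M * (permMat F π⁻¹).transpose = Matrix.of fun i j => M i (π j) := by
  ext i j
  have : ∀ b : n, (j = π⁻¹ b) = (π j = b) := by
    intro b; simp [Equiv.Perm.inv_def, Equiv.eq_symm_apply]
  simp only [Matrix.mul_apply, permMat, Matrix.transpose_apply, Matrix.of_apply, this,
    mul_ite, mul_one, mul_zero]
  simp

/-- The hyperrook placement `(m_σ, m_{π⁻¹}) ∘ E` (acting by `(g₁,g₂) ∘ (M₁,M₂) =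
(g₁M₁g₂ᵀ, g₁M₂g₂ᵀ)`) has its `1`s in the front face exactly at positions
`(w(j), j)` and in the back face at `(w(c(j)), j)`, where `w = σ ∘ π̄` and
`c = π̄⁻¹ (1 2 ⋯ k+1) π̄`. -/
theorem stmt13 (F : Type*) [Field F] (k : ℕ) (σ : Equiv.Perm (Fin (k + 1)))
    (π : Equiv.Perm (Fin k)) :
    (permMat F σ * (Matrix.of fun (i : Fin (k + 1)) (j : Fin k) =>
        if (i : ℕ) = (j : ℕ) then (1 : F) else 0) * Matrix.transpose (permMat F π⁻¹) =
      Matrix.of fun (i : Fin (k + 1)) (j : Fin k) =>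
        if i = (σ * extendPerm k π) j.castSucc then 1 else 0) ∧
    (permMat F σ * (Matrix.of fun (i : Fin (k + 1)) (j : Fin k) =>
        if (i : ℕ) = (j : ℕ) + 1 then (1 : F) else 0) * Matrix.transpose (permMat F π⁻¹) =
      Matrix.of fun (i : Fin (k + 1)) (j : Fin k) =>
        if i = (σ * extendPerm k π)
            (((extendPerm k π)⁻¹ * finRotate (k + 1) * extendPerm k π) j.castSucc)
          then 1 else 0) := by
  constructor
  · rw [permMat_mul, mul_permMat]
    ext i j
    simp only [Matrix.of_apply, Equiv.Perm.mul_apply, extendPerm_castSucc]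
    congr 1
    rw [eq_comm, ← Equiv.symm_apply_eq]
    rw [show σ.symm i = σ⁻¹ i from rfl]
    simp [Fin.ext_iff]
  · rw [permMat_mul, mul_permMat]
    ext i j
    simp only [Matrix.of_apply, Equiv.Perm.mul_apply, extendPerm_castSucc,
      Equiv.Perm.coe_inv, Equiv.apply_symm_apply]
    congr 1
    rw [eq_comm, ← Equiv.symm_apply_eq]
    rw [show σ.symm i = σ⁻¹ i from rfl]
    rw [Fin.ext_iff, coe_finRotate]
    simp [Fin.ext_iff, (Fin.castSucc_lt_last (π j)).ne]
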